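/- Let p ∈ (0,1] and let 𝒳 = B ∪ G and 𝒳 = B_η ∪ G_η be two partitions of 𝒳 into disjoint sets. Then for every probability measure η on 𝒳, 1/L_η(p) ≤ 2^{6/p − 3} · { γ* · sup_{e : Q(e) ≠ 0} [ (1/Q(e)) Σ_{x ∈ G, y ∈ G_η : e ∈ γ(x,y)} π(x)η(y) ] + 2 · ( Σ_{e ∈ ℬ} 1/Q(e) ) · ( π(B)^{2/p} + η(B_η)^{2/p} ) }. -/

import Mathlib

open scoped BigOperators

noncomputable section

/-- The Dirichlet form `E(f,g)`. -/
def dirichletForm {X : Type} [Fintype X] (π : X → ℝ) (k : X → X → ℝ)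
    (f g : X → ℝ) : ℝ :=
  (1 / 2) * ∑ x, ∑ y, (f x - f y) * (g x - g y) * k x y * π x * π y

/-- The sup norm `‖f‖_∞`. -/
def supNorm {X : Type} [Fintype X] (f : X → ℝ) : ℝ := ⨆ x, |f x|

/-- The generalized Poincaré constant `L_η(p)`. -/
def genPoincare {X : Type} [Fintype X] (π : X → ℝ) (k : X → X → ℝ)
    (η : X → ℝ) (p : ℝ) : ℝ :=
  sInf { r : ℝ | ∃ f : X → ℝ, f ≠ 0 ∧ (∑ x, π x * f x) = 0 ∧ (∑ x, η x * |f x|) ≠ 0 ∧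
    r = dirichletForm π k f f * supNorm f ^ ((2 - 2 * p) / p) /
      (∑ x, η x * |f x|) ^ (2 / p) }

/-- The (ordered) edges of a path given as its list of successive vertices. -/
def pathEdges {X : Type} (l : List X) : List (X × X) := l.zip l.tail

/-- The weight `Q(e) = k(x,y) π(x) π(y)` of an edge `e = (x,y)`. -/
def Qw {X : Type} (π : X → ℝ) (k : X → X → ℝ) (e : X × X) : ℝ :=
  k e.1 e.2 * π e.1 * π e.2

lemma pathEdges_nil {X : Type} : pathEdges ([] : List X) = [] := rfl
lemma pathEdges_single {X : Type} (a : X) : pathEdges [a] = [] := rfl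
lemma pathEdges_cons_cons {X : Type} (a b : X) (t : List X) :
    pathEdges (a :: b :: t) = (a, b) :: pathEdges (b :: t) := by
  simp [pathEdges, List.zip_cons_cons]

lemma mem_pathEdges_cons {X : Type} {e : X × X} {t : List X} (a : X)
    (h : e ∈ pathEdges t) : e ∈ pathEdges (a :: t) := by
  cases t with
  | nil => simp [pathEdges_nil] at h
  | cons b t' =>
    rw [pathEdges_cons_cons]
    exact List.mem_cons_of_mem _ h

lemma mem_pathEdges_append {X : Type} {e : X × X} {s : List X} (u : List X)
    (h : e ∈ pathEdges s) : e ∈ pathEdges (u ++ s) := by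
  induction u with
  | nil => simpa using h
  | cons a u ih => exact mem_pathEdges_cons a ih

lemma fst_mem_of_mem_pathEdges {X : Type} {e : X × X} {l : List X}
    (h : e ∈ pathEdges l) : e.1 ∈ l := by
  obtain ⟨a, b⟩ := e
  exact (List.of_mem_zip h).1

lemma pathEdges_nodup {X : Type} {l : List X} (h : l.Nodup) : (pathEdges l).Nodup := by
  induction l with
  | nil => simp [pathEdges_nil]
  | cons a t ih =>
    cases t with
    | nil => simp [pathEdges_single]
    | cons b t' =>
      rw [pathEdges_cons_cons]
      refine List.nodup_cons.2 ⟨fun hmem => ?_, ih (List.nodup_cons.1 h).2⟩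
      have := fst_mem_of_mem_pathEdges hmem
      exact (List.nodup_cons.1 h).1 this

lemma pathEdges_length {X : Type} (l : List X) : (pathEdges l).length = l.length - 1 := by
  simp [pathEdges, List.length_zip, List.length_tail]

lemma telescope {X : Type} (f : X → ℝ) :
    ∀ (l : List X) (x y : X), l.head? = some x → l.getLast? = some y →
      |f y - f x| ≤ ((pathEdges l).map (fun e => |f e.2 - f e.1|)).sum := by
  intro l
  induction l with
  | nil => intro x y hx; simp at hx
  | cons a t ih =>
    intro x y hx hy
    simp only [List.head?_cons, Option.some.injEq] at hx
    subst hx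
    cases t with
    | nil =>
      simp only [List.getLast?_singleton, Option.some.injEq] at hy
      subst hy; simp [pathEdges_single]
    | cons b t' =>
      have hy' : (b :: t').getLast? = some y := by
        rwa [List.getLast?_cons_cons] at hy
      have h1 := ih b y rfl hy'
      rw [pathEdges_cons_cons]
      simp only [List.map_cons, List.sum_cons]
      have : |f y - f a| ≤ |f b - f a| + |f y - f b| := by
        calc |f y - f a| = |(f b - f a) + (f y - f b)| := by ring_nf
          _ ≤ |f b - f a| + |f y - f b| := abs_add_le _ _
      linarith

lemma erase_loops {X : Type} [DecidableEq X] :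
    ∀ (n : ℕ) (l : List X), l.length ≤ n →
      ∃ l' : List X, l'.Nodup ∧ l'.head? = l.head? ∧ l'.getLast? = l.getLast? ∧
        l'.length ≤ l.length ∧ (∀ x ∈ l', x ∈ l) ∧ (∀ e ∈ pathEdges l', e ∈ pathEdges l) := by
  intro n
  induction n with
  | zero =>
    intro l hl
    have : l = [] := List.length_eq_zero_iff.1 (Nat.le_zero.1 hl)
    subst this
    exact ⟨[], by simp, rfl, rfl, le_rfl, by simp, by simp⟩
  | succ n ih =>
    intro l hl
    cases l with
    | nil => exact ⟨[], by simp, rfl, rfl, le_rfl, by simp, by simp⟩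
    | cons a t =>
      by_cases ha : a ∈ t
      · set i := List.idxOf a t with hidef
        have hi : i < t.length := List.idxOf_lt_length_iff.2 ha
        set s := t.drop i with hsdef
        have hshead : s.head? = some a := by
          rw [hsdef, List.head?_drop, List.getElem?_eq_getElem hi, List.getElem_idxOf hi]
        have hsne : s ≠ [] := by
          intro h; rw [h] at hshead; simp at hshead
        have hslen : s.length ≤ t.length := by
          rw [hsdef, List.length_drop]; omega
        have hdecomp : a :: t = (a :: t.take i) ++ s := by
          simp [hsdef, List.take_append_drop]
        obtain ⟨l', h1, h2, h3, h4, h5, h6⟩ := ih s (by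
          have := hslen; simp only [List.length_cons] at hl; omega)
        refine ⟨l', h1, ?_, ?_, ?_, ?_, ?_⟩
        · rw [h2, hshead]; rfl
        · rw [h3, hdecomp, List.getLast?_append]
          cases hgl : s.getLast? with
          | none => rw [List.getLast?_eq_none_iff] at hgl; exact absurd hgl hsne
          | some c => rfl
        · simp only [List.length_cons]; omega
        · intro x hx
          exact List.mem_cons_of_mem a (List.mem_of_mem_drop (h5 x hx))
        · intro e he
          rw [hdecomp]
          exact mem_pathEdges_append _ (h6 e he)
      · obtain ⟨t', h1, h2, h3, h4, h5, h6⟩ := ih t (by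
          simp only [List.length_cons] at hl; omega)
        refine ⟨a :: t', List.nodup_cons.2 ⟨fun hmem => ha (h5 a hmem), h1⟩, rfl, ?_, ?_, ?_, ?_⟩
        · cases t with
          | nil =>
            have : t' = [] := List.head?_eq_none_iff.1 (by rw [h2]; rfl)
            subst this; rfl
          | cons b t'' =>
            have ht'ne : t' ≠ [] := by
              intro h; rw [h] at h2; simp at h2
            cases t' with
            | nil => exact absurd rfl ht'ne
            | cons c t''' =>
              rw [List.getLast?_cons_cons, List.getLast?_cons_cons, h3]
        · simp only [List.length_cons]; omega
        · intro x hx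
          rcases List.mem_cons.1 hx with h | h
          · exact h ▸ List.mem_cons_self (a := a) (l := t)
          · exact List.mem_cons_of_mem a (h5 x h)
        · intro e he
          cases t' with
          | nil => simp [pathEdges_single] at he
          | cons c t''' =>
            rw [pathEdges_cons_cons] at he
            rcases List.mem_cons.1 he with h | h
            · subst h
              have : t.head? = some c := by rw [← h2]; rfl
              cases t with
              | nil => simp at this
              | cons b t'' =>
                simp only [List.head?_cons, Option.some.injEq] at this
                subst this
                rw [pathEdges_cons_cons]
                exact List.mem_cons_self
            · exact mem_pathEdges_cons a (h6 e h)

/-- Power mean inequality -/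
lemma pm_ineq {q a b : ℝ} (hq : 1 ≤ q) (ha : 0 ≤ a) (hb : 0 ≤ b) :
    (a + b) ^ q ≤ 2 ^ (q - 1) * (a ^ q + b ^ q) := by
  have h := NNReal.rpow_add_le_mul_rpow_add_rpow a.toNNReal b.toNNReal hq
  have h2 := NNReal.coe_le_coe.2 h
  push_cast [Real.coe_toNNReal _ ha, Real.coe_toNNReal _ hb] at h2
  exact h2

lemma dirichlet_nonneg {X : Type} [Fintype X] (π : X → ℝ) (k : X → X → ℝ)
    (hknn : ∀ x y, 0 ≤ k x y) (hπnn : ∀ x, 0 ≤ π x) (g : X → ℝ) :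
    0 ≤ dirichletForm π k g g := by
  unfold dirichletForm
  have : ∀ x y : X, 0 ≤ (g x - g y) * (g x - g y) * k x y * π x * π y := by
    intro x y
    have := mul_self_nonneg (g x - g y)
    have := hknn x y
    have := hπnn x
    have := hπnn y
    positivity
  exact mul_nonneg (by norm_num) (Finset.sum_nonneg fun x _ =>
    Finset.sum_nonneg fun y _ => this x y)

/-- extraction of a simple path -/
lemma exists_good_path {X : Type} [DecidableEq X] (γ : X → X → List X)
    (x y : X) (hxy : x ≠ y) (hh : (γ x y).head? = some x) (hl : (γ x y).getLast? = some y) :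
    ∃ l' : List X, l'.Nodup ∧ l'.head? = some x ∧ l'.getLast? = some y ∧
      l'.length ≤ (γ x y).length ∧ ∀ e ∈ pathEdges l', e ∈ pathEdges (γ x y) := by
  obtain ⟨l', h1, h2, h3, h4, h5, h6⟩ := erase_loops (γ x y).length (γ x y) le_rfl
  exact ⟨l', h1, h2.trans hh, h3.trans hl, h4, h6⟩


set_option maxHeartbeats 2000000 in
lemma main_ineq {X : Type} [Fintype X] [DecidableEq X]
    (π : X → ℝ) (hπpos : ∀ x, 0 < π x) (hπ1 : ∑ x, π x = 1)
    (k : X → X → ℝ) (hknn : ∀ x y, 0 ≤ k x y)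
    (γ : X → X → List X)
    (hγ : ∀ x y, x ≠ y → (γ x y).head? = some x ∧ (γ x y).getLast? = some y ∧
      ∀ e ∈ pathEdges (γ x y), k e.1 e.2 ≠ 0)
    (p : ℝ) (hp : p ∈ Set.Ioc (0 : ℝ) 1)
    (B G : Finset X) (hcover : B ∪ G = Finset.univ)
    (Bη Gη : Finset X) (hcoverη : Bη ∪ Gη = Finset.univ)
    (η : X → ℝ) (hηnn : ∀ x, 0 ≤ η x) (hη1 : ∑ x, η x = 1)
    (g : X → ℝ) (hg0 : (∑ x, π x * g x) = 0) (hgb : ∀ x, |g x| ≤ 1) :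
    (∑ x, η x * |g x|) ^ (2 / p) ≤
      ((2 : ℝ) ^ (6 / p - 3) *
        ((sSup { r : ℝ | ∃ x y : X, x ≠ y ∧ r = ((γ x y).length - 1 : ℕ) }) *
          (sSup { r : ℝ | ∃ e : X × X, Qw π k e ≠ 0 ∧
            r = (1 / Qw π k e) *
              ∑ x, ∑ y, if x ∈ G ∧ y ∈ Gη ∧ x ≠ y ∧ e ∈ pathEdges (γ x y) then
                π x * η y else 0 }) +
        2 * (∑ e : X × X,
              if ∃ x y : X, x ≠ y ∧ e ∈ pathEdges (γ x y) ∧ (x ∈ B ∨ y ∈ Bη) then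
                1 / Qw π k e else 0) *
          ((∑ x ∈ B, π x) ^ (2 / p) + (∑ x ∈ Bη, η x) ^ (2 / p)))) *
        dirichletForm π k g g := by
  obtain ⟨hp0, hp1⟩ := hp
  have hq1 : (1:ℝ) ≤ 2 / p := by rw [le_div_iff₀ hp0]; linarith
  have hq2 : (2:ℝ) ≤ 2 / p := by rw [le_div_iff₀ hp0]; linarith
  set q := 2 / p with hqdef
  have hq0 : (0:ℝ) < q := by linarith only [hq1]
  set E := dirichletForm π k g g with hEdef
  have hE0 : 0 ≤ E := dirichlet_nonneg π k hknn (fun x => (hπpos x).le) g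
  set γs := sSup { r : ℝ | ∃ x y : X, x ≠ y ∧ r = ((γ x y).length - 1 : ℕ) } with hγsdef
  set A := sSup { r : ℝ | ∃ e : X × X, Qw π k e ≠ 0 ∧
      r = (1 / Qw π k e) *
        ∑ x, ∑ y, if x ∈ G ∧ y ∈ Gη ∧ x ≠ y ∧ e ∈ pathEdges (γ x y) then
          π x * η y else 0 } with hAdef
  set SB := ∑ e : X × X,
      if ∃ x y : X, x ≠ y ∧ e ∈ pathEdges (γ x y) ∧ (x ∈ B ∨ y ∈ Bη) then
        1 / Qw π k e else 0 with hSBdef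
  set πB := ∑ x ∈ B, π x with hπBdef
  set ηB := ∑ x ∈ Bη, η x with hηBdef
  have hπB0 : 0 ≤ πB := Finset.sum_nonneg fun x _ => (hπpos x).le
  have hηB0 : 0 ≤ ηB := Finset.sum_nonneg fun x _ => hηnn x
  have hπηnn : ∀ z : X × X, 0 ≤ π z.1 * η z.2 :=
    fun z => mul_nonneg (hπpos z.1).le (hηnn z.2)
  have hQnn : ∀ e : X × X, 0 ≤ Qw π k e := fun e => by
    have h1 := hknn e.1 e.2
    have h2 := (hπpos e.1).le
    have h3 := (hπpos e.2).le
    unfold Qw; positivity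
  have hQpos : ∀ e : X × X, k e.1 e.2 ≠ 0 → 0 < Qw π k e := fun e hke =>
    lt_of_le_of_ne (hQnn e) (Ne.symm (by
      unfold Qw
      exact mul_ne_zero (mul_ne_zero hke (hπpos e.1).ne') (hπpos e.2).ne'))
  have hSB0 : 0 ≤ SB := Finset.sum_nonneg fun e _ => by
    split
    · exact one_div_nonneg.2 (hQnn e)
    · exact le_rfl
  -- the sup `γs`
  have hγsbdd : BddAbove { r : ℝ | ∃ x y : X, x ≠ y ∧ r = ((γ x y).length - 1 : ℕ) } :=
    Set.Finite.bddAbove (Set.Finite.subset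
      (Set.finite_range (fun z : X × X => (((γ z.1 z.2).length - 1 : ℕ) : ℝ)))
      (by rintro r ⟨x, y, -, rfl⟩; exact ⟨(x, y), rfl⟩))
  have hγsmem : ∀ x y : X, x ≠ y → (((γ x y).length - 1 : ℕ) : ℝ) ≤ γs :=
    fun x y hxy => le_csSup hγsbdd ⟨x, y, hxy, rfl⟩
  have hγs0 : 0 ≤ γs := Real.sSup_nonneg (by rintro r ⟨x, y, -, rfl⟩; positivity)
  -- the sup `A`
  have hAbdd : BddAbove { r : ℝ | ∃ e : X × X, Qw π k e ≠ 0 ∧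
      r = (1 / Qw π k e) *
        ∑ x, ∑ y, if x ∈ G ∧ y ∈ Gη ∧ x ≠ y ∧ e ∈ pathEdges (γ x y) then
          π x * η y else 0 } :=
    Set.Finite.bddAbove (Set.Finite.subset
      (Set.finite_range (fun e : X × X => (1 / Qw π k e) *
        ∑ x, ∑ y, if x ∈ G ∧ y ∈ Gη ∧ x ≠ y ∧ e ∈ pathEdges (γ x y) then
          π x * η y else 0))
      (by rintro r ⟨e, -, rfl⟩; exact ⟨e, rfl⟩))
  have hAmem : ∀ e : X × X, Qw π k e ≠ 0 →
      (1 / Qw π k e) *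
        (∑ x, ∑ y, if x ∈ G ∧ y ∈ Gη ∧ x ≠ y ∧ e ∈ pathEdges (γ x y) then
          π x * η y else 0) ≤ A :=
    fun e he => le_csSup hAbdd ⟨e, he, rfl⟩
  have hA0 : 0 ≤ A := Real.sSup_nonneg (by
    rintro r ⟨e, -, rfl⟩
    refine mul_nonneg (one_div_nonneg.2 (hQnn e)) ?_
    refine Finset.sum_nonneg fun x _ => Finset.sum_nonneg fun y _ => ?_
    split
    · exact hπηnn (x, y)
    · exact le_rfl)
  -- decomposition of the mean
  have hkey : ∀ y : X, |g y| ≤ ∑ x, π x * |g y - g x| := by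
    intro y
    have hgy : g y = ∑ x, π x * (g y - g x) := by
      simp_rw [mul_sub]
      rw [Finset.sum_sub_distrib, ← Finset.sum_mul, hπ1, hg0]
      ring
    calc |g y| = |∑ x, π x * (g y - g x)| := by rw [← hgy]
      _ ≤ ∑ x, |π x * (g y - g x)| := Finset.abs_sum_le_sum_abs _ _
      _ = ∑ x, π x * |g y - g x| := Finset.sum_congr rfl fun x _ => by
          rw [abs_mul, abs_of_pos (hπpos x)]
  set P : X × X → Prop := fun z => z.1 ∈ G ∧ z.2 ∈ Gη ∧ z.1 ≠ z.2 with hPdef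
  set F := Finset.univ.filter P with hFdef
  set T := ∑ z ∈ F, π z.1 * η z.2 * |g z.2 - g z.1| with hTdef
  set R := ∑ z ∈ Finset.univ.filter (fun z => ¬ P z), π z.1 * η z.2 * |g z.2 - g z.1|
    with hRdef
  have step1 : (∑ x, η x * |g x|) ≤ T + R := by
    have e4 : ∑ y, η y * ∑ x, π x * |g y - g x|
        = ∑ z : X × X, π z.1 * η z.2 * |g z.2 - g z.1| := by
      rw [Fintype.sum_prod_type, Finset.sum_comm]
      simp_rw [Finset.mul_sum]
      exact Finset.sum_congr rfl fun y _ => Finset.sum_congr rfl fun x _ => by ring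
    calc (∑ x, η x * |g x|) ≤ ∑ y, η y * ∑ x, π x * |g y - g x| :=
          Finset.sum_le_sum fun y _ => mul_le_mul_of_nonneg_left (hkey y) (hηnn y)
      _ = ∑ z : X × X, π z.1 * η z.2 * |g z.2 - g z.1| := e4
      _ = T + R := (Finset.sum_filter_add_sum_filter_not _ P _).symm
  have hpathsum : ∀ x y : X, x ≠ y → ∃ s : Finset (X × X),
      (∀ e ∈ s, e ∈ pathEdges (γ x y)) ∧
      ((s.card : ℝ) ≤ (((γ x y).length - 1 : ℕ) : ℝ)) ∧
      |g y - g x| ≤ ∑ e ∈ s, |g e.2 - g e.1| := by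
    intro x y hxy
    obtain ⟨hh, hl, -⟩ := hγ x y hxy
    obtain ⟨l', hnd, hh', hl', hlen, hsub⟩ := exists_good_path γ x y hxy hh hl
    refine ⟨(pathEdges l').toFinset, ?_, ?_, ?_⟩
    · intro e he; exact hsub e (List.mem_toFinset.1 he)
    · rw [List.toFinset_card_of_nodup (pathEdges_nodup hnd), pathEdges_length]
      exact_mod_cast Nat.sub_le_sub_right hlen 1
    · have htel := telescope g l' x y hh' hl'
      rw [List.sum_toFinset _ (pathEdges_nodup hnd)]
      exact htel
  have h2E : ∀ s : Finset (X × X),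
      (∑ e ∈ s, (g e.2 - g e.1) ^ 2 * Qw π k e) ≤ 2 * E := by
    intro s
    have h1 : (∑ e ∈ s, (g e.2 - g e.1) ^ 2 * Qw π k e)
        ≤ ∑ e : X × X, (g e.2 - g e.1) ^ 2 * Qw π k e :=
      Finset.sum_le_sum_of_subset_of_nonneg (Finset.subset_univ s)
        (fun e _ _ => mul_nonneg (sq_nonneg _) (hQnn e))
    have h2 : ∑ e : X × X, (g e.2 - g e.1) ^ 2 * Qw π k e = 2 * E := by
      rw [hEdef]
      unfold dirichletForm
      rw [Fintype.sum_prod_type, ← mul_assoc]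
      norm_num
      exact Finset.sum_congr rfl fun x _ => Finset.sum_congr rfl fun y _ => by
        unfold Qw; dsimp only; ring
    linarith
  have hsumprod : ∑ z : X × X, π z.1 * η z.2 = 1 := by
    rw [Fintype.sum_prod_type]
    dsimp only
    rw [← Finset.sum_mul_sum, hπ1, hη1, one_mul]
  have hT0 : 0 ≤ T := Finset.sum_nonneg fun z _ => mul_nonneg (hπηnn z) (abs_nonneg _)
  have hR0 : 0 ≤ R := Finset.sum_nonneg fun z _ => mul_nonneg (hπηnn z) (abs_nonneg _)
  have hFle1 : ∑ z ∈ F, π z.1 * η z.2 ≤ 1 :=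
    hsumprod ▸ Finset.sum_le_sum_of_subset_of_nonneg (Finset.filter_subset _ _)
      (fun z _ _ => hπηnn z)
  have habs2 : ∀ z : X × X, |g z.2 - g z.1| ≤ 2 := fun z => by
    have h1 := hgb z.1; have h2 := hgb z.2
    calc |g z.2 - g z.1| ≤ |g z.2| + |g z.1| := abs_sub _ _
      _ ≤ 2 := by linarith
  have hT2' : T ≤ 2 := by
    calc T ≤ ∑ z ∈ F, π z.1 * η z.2 * 2 :=
          Finset.sum_le_sum fun z _ => mul_le_mul_of_nonneg_left (habs2 z) (hπηnn z)
      _ = (∑ z ∈ F, π z.1 * η z.2) * 2 := by rw [← Finset.sum_mul]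
      _ ≤ 1 * 2 := mul_le_mul_of_nonneg_right hFle1 (by norm_num)
      _ = 2 := one_mul 2
  -- Cauchy-Schwarz for the good part
  have hU0 : 0 ≤ ∑ z ∈ F, π z.1 * η z.2 * (g z.2 - g z.1) ^ 2 :=
    Finset.sum_nonneg fun z _ => mul_nonneg (hπηnn z) (sq_nonneg _)
  have hTsq : T ^ 2 ≤ ∑ z ∈ F, π z.1 * η z.2 * (g z.2 - g z.1) ^ 2 := by
    have hcs := Finset.sum_mul_sq_le_sq_mul_sq F
      (fun z => Real.sqrt (π z.1 * η z.2))
      (fun z => Real.sqrt (π z.1 * η z.2) * |g z.2 - g z.1|)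
    have e1 : ∀ z : X × X, Real.sqrt (π z.1 * η z.2) *
        (Real.sqrt (π z.1 * η z.2) * |g z.2 - g z.1|)
        = π z.1 * η z.2 * |g z.2 - g z.1| := fun z => by
      rw [← mul_assoc, Real.mul_self_sqrt (hπηnn z)]
    have e2 : ∀ z : X × X, (Real.sqrt (π z.1 * η z.2)) ^ 2 = π z.1 * η z.2 :=
      fun z => Real.sq_sqrt (hπηnn z)
    have e3 : ∀ z : X × X, (Real.sqrt (π z.1 * η z.2) * |g z.2 - g z.1|) ^ 2
        = π z.1 * η z.2 * (g z.2 - g z.1) ^ 2 := fun z => by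
      rw [mul_pow, Real.sq_sqrt (hπηnn z), sq_abs]
    simp_rw [e1, e2, e3] at hcs
    calc T ^ 2 ≤ (∑ z ∈ F, π z.1 * η z.2) *
          ∑ z ∈ F, π z.1 * η z.2 * (g z.2 - g z.1) ^ 2 := hcs
      _ ≤ 1 * ∑ z ∈ F, π z.1 * η z.2 * (g z.2 - g z.1) ^ 2 :=
          mul_le_mul_of_nonneg_right hFle1 hU0
      _ = _ := one_mul _
  -- per-pair path bound
  have hUz : ∀ z ∈ F, (g z.2 - g z.1) ^ 2 ≤
      γs * ∑ e ∈ Finset.univ.filter (fun e => e ∈ pathEdges (γ z.1 z.2)),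
        (g e.2 - g e.1) ^ 2 := by
    intro z hz
    have hzne : z.1 ≠ z.2 := ((Finset.mem_filter.1 hz).2).2.2
    obtain ⟨s, hs1, hs2, hs3⟩ := hpathsum z.1 z.2 hzne
    have hcs := Finset.sum_mul_sq_le_sq_mul_sq s (fun _ => (1:ℝ))
      (fun e => |g e.2 - g e.1|)
    simp only [one_mul, one_pow] at hcs
    have hcard : (∑ _e ∈ s, (1:ℝ)) = s.card := by simp
    have hsum_le : ∑ e ∈ s, |g e.2 - g e.1| ^ 2
        ≤ ∑ e ∈ Finset.univ.filter (fun e => e ∈ pathEdges (γ z.1 z.2)),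
          (g e.2 - g e.1) ^ 2 := by
      simp_rw [sq_abs]
      refine Finset.sum_le_sum_of_subset_of_nonneg ?_ (fun e _ _ => sq_nonneg _)
      intro e he
      exact Finset.mem_filter.2 ⟨Finset.mem_univ e, hs1 e he⟩
    have hsnn : 0 ≤ ∑ e ∈ s, |g e.2 - g e.1| ^ 2 :=
      Finset.sum_nonneg fun e _ => sq_nonneg _
    calc (g z.2 - g z.1) ^ 2 = |g z.2 - g z.1| ^ 2 := (sq_abs _).symm
      _ ≤ (∑ e ∈ s, |g e.2 - g e.1|) ^ 2 := pow_le_pow_left₀ (abs_nonneg _) hs3 2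
      _ ≤ (s.card : ℝ) * ∑ e ∈ s, |g e.2 - g e.1| ^ 2 := hcard ▸ hcs
      _ ≤ γs * ∑ e ∈ Finset.univ.filter (fun e => e ∈ pathEdges (γ z.1 z.2)),
            (g e.2 - g e.1) ^ 2 :=
          mul_le_mul (le_trans hs2 (hγsmem z.1 z.2 hzne)) hsum_le hsnn hγs0
  -- summation swap
  set V : X × X → ℝ := fun e =>
    ∑ z ∈ F.filter (fun z => e ∈ pathEdges (γ z.1 z.2)), π z.1 * η z.2 with hVdef
  have swap : ∑ z ∈ F, π z.1 * η z.2 *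
      (∑ e ∈ Finset.univ.filter (fun e => e ∈ pathEdges (γ z.1 z.2)),
        (g e.2 - g e.1) ^ 2)
      = ∑ e : X × X, (g e.2 - g e.1) ^ 2 * V e := by
    simp_rw [hVdef, Finset.sum_filter, Finset.mul_sum]
    rw [Finset.sum_comm]
    refine Finset.sum_congr rfl fun e _ => Finset.sum_congr rfl fun z _ => ?_
    split_ifs with h
    · ring
    · ring
  have hU2 : (∑ z ∈ F, π z.1 * η z.2 * (g z.2 - g z.1) ^ 2)
      ≤ γs * ∑ e : X × X, (g e.2 - g e.1) ^ 2 * V e := by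
    rw [← swap, Finset.mul_sum]
    refine Finset.sum_le_sum fun z hz => ?_
    calc π z.1 * η z.2 * (g z.2 - g z.1) ^ 2
        ≤ π z.1 * η z.2 * (γs *
            ∑ e ∈ Finset.univ.filter (fun e => e ∈ pathEdges (γ z.1 z.2)),
              (g e.2 - g e.1) ^ 2) :=
          mul_le_mul_of_nonneg_left (hUz z hz) (hπηnn z)
      _ = γs * (π z.1 * η z.2 *
            ∑ e ∈ Finset.univ.filter (fun e => e ∈ pathEdges (γ z.1 z.2)),
              (g e.2 - g e.1) ^ 2) := by ring
  have hVA : ∀ e : X × X, V e ≤ A * Qw π k e := by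
    intro e
    by_cases hV0 : V e = 0
    · rw [hV0]; exact mul_nonneg hA0 (hQnn e)
    · have hV0' : (∑ z ∈ F.filter (fun z => e ∈ pathEdges (γ z.1 z.2)),
          π z.1 * η z.2) ≠ 0 := by rw [hVdef] at hV0; exact hV0
      obtain ⟨z, hz, -⟩ := Finset.exists_ne_zero_of_sum_ne_zero hV0'
      have hz2 := Finset.mem_filter.1 hz
      have hzne : z.1 ≠ z.2 := ((Finset.mem_filter.1 hz2.1).2).2.2
      have hke : k e.1 e.2 ≠ 0 := (hγ z.1 z.2 hzne).2.2 e hz2.2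
      have hQe : 0 < Qw π k e := hQpos e hke
      have hVeq : V e = ∑ x, ∑ y,
          (if x ∈ G ∧ y ∈ Gη ∧ x ≠ y ∧ e ∈ pathEdges (γ x y) then π x * η y else 0) := by
        rw [hVdef]
        dsimp only
        rw [hFdef, Finset.filter_filter, Finset.sum_filter, Fintype.sum_prod_type]
        refine Finset.sum_congr rfl fun x _ => Finset.sum_congr rfl fun y _ => ?_
        by_cases h1 : x ∈ G <;> by_cases h2 : y ∈ Gη <;> by_cases h3 : x = y <;>
          by_cases h4 : e ∈ pathEdges (γ x y) <;>
          simp [hPdef, h1, h2, h3, h4]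
      have hle := hAmem e hQe.ne'
      rw [← hVeq] at hle
      calc V e = Qw π k e * ((1 / Qw π k e) * V e) := by field_simp
        _ ≤ Qw π k e * A := mul_le_mul_of_nonneg_left hle (hQnn e)
        _ = A * Qw π k e := mul_comm _ _
  have hT2E : T ^ 2 ≤ γs * (A * (2 * E)) := by
    calc T ^ 2 ≤ ∑ z ∈ F, π z.1 * η z.2 * (g z.2 - g z.1) ^ 2 := hTsq
      _ ≤ γs * ∑ e : X × X, (g e.2 - g e.1) ^ 2 * V e := hU2
      _ ≤ γs * ∑ e : X × X, (g e.2 - g e.1) ^ 2 * (A * Qw π k e) :=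
          mul_le_mul_of_nonneg_left (Finset.sum_le_sum fun e _ =>
            mul_le_mul_of_nonneg_left (hVA e) (sq_nonneg _)) hγs0
      _ = γs * (A * ∑ e : X × X, (g e.2 - g e.1) ^ 2 * Qw π k e) := by
          simp_rw [Finset.mul_sum]
          exact Finset.sum_congr rfl fun e _ => by ring
      _ ≤ γs * (A * (2 * E)) :=
          mul_le_mul_of_nonneg_left
            (mul_le_mul_of_nonneg_left (h2E Finset.univ) hA0) hγs0
  -- the bad part
  have hBmem : ∀ x : X, x ∉ G → x ∈ B := fun x hx => by
    have hx2 : x ∈ B ∪ G := by rw [hcover]; exact Finset.mem_univ x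
    rcases Finset.mem_union.1 hx2 with h | h
    · exact h
    · exact absurd h hx
  have hBηmem : ∀ x : X, x ∉ Gη → x ∈ Bη := fun x hx => by
    have hx2 : x ∈ Bη ∪ Gη := by rw [hcoverη]; exact Finset.mem_univ x
    rcases Finset.mem_union.1 hx2 with h | h
    · exact h
    · exact absurd h hx
  set Fc' := Finset.univ.filter (fun z : X × X => ¬ P z ∧ z.1 ≠ z.2) with hFc'def
  have hRsplit : R = ∑ z ∈ Fc', π z.1 * η z.2 * |g z.2 - g z.1| := by
    rw [hRdef]
    refine (Finset.sum_subset ?_ ?_).symm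
    · intro z hz
      have h2 := (Finset.mem_filter.1 hz).2
      exact Finset.mem_filter.2 ⟨Finset.mem_univ z, h2.1⟩
    · intro z hz hz'
      have h2 := (Finset.mem_filter.1 hz).2
      have hzz : z.1 = z.2 := by
        by_contra hne
        exact hz' (Finset.mem_filter.2 ⟨Finset.mem_univ z, h2, hne⟩)
      rw [hzz, sub_self, abs_zero, mul_zero]
  have hBorB : ∀ z ∈ Fc', z.1 ∈ B ∨ z.2 ∈ Bη := by
    intro z hz
    obtain ⟨hnp, hne⟩ := (Finset.mem_filter.1 hz).2
    by_cases h1 : z.1 ∈ G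
    · by_cases h2 : z.2 ∈ Gη
      · exact absurd ⟨h1, h2, hne⟩ hnp
      · exact Or.inr (hBηmem _ h2)
    · exact Or.inl (hBmem _ h1)
  have hWbound : ∑ z ∈ Fc', π z.1 * η z.2 ≤ πB + ηB := by
    have step1' : ∑ z ∈ Fc', π z.1 * η z.2
        ≤ ∑ z : X × X, ((if z.1 ∈ B then π z.1 * η z.2 else 0)
            + (if z.2 ∈ Bη then π z.1 * η z.2 else 0)) := by
      refine le_trans (Finset.sum_le_sum (fun z hz => ?_))
        (Finset.sum_le_sum_of_subset_of_nonneg (Finset.subset_univ _) (fun z _ _ => ?_))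
      · rcases hBorB z hz with h | h
        · rw [if_pos h]
          have : (0:ℝ) ≤ if z.2 ∈ Bη then π z.1 * η z.2 else 0 := by
            split
            · exact hπηnn z
            · exact le_rfl
          linarith
        · rw [if_pos h]
          have : (0:ℝ) ≤ if z.1 ∈ B then π z.1 * η z.2 else 0 := by
            split
            · exact hπηnn z
            · exact le_rfl
          linarith
      · have h1 : (0:ℝ) ≤ if z.1 ∈ B then π z.1 * η z.2 else 0 := by
          split
          · exact hπηnn z
          · exact le_rfl
        have h2 : (0:ℝ) ≤ if z.2 ∈ Bη then π z.1 * η z.2 else 0 := by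
          split
          · exact hπηnn z
          · exact le_rfl
        linarith
    have eq1 : ∑ z : X × X, (if z.1 ∈ B then π z.1 * η z.2 else 0) = πB := by
      rw [Fintype.sum_prod_type]
      have hx : ∀ x : X, (∑ y, if x ∈ B then π x * η y else 0)
          = (if x ∈ B then π x else 0) := by
        intro x
        by_cases h : x ∈ B <;> simp [h, ← Finset.mul_sum, hη1]
      simp_rw [hx]
      rw [Finset.sum_ite_mem, Finset.univ_inter, hπBdef]
    have eq2 : ∑ z : X × X, (if z.2 ∈ Bη then π z.1 * η z.2 else 0) = ηB := by
      rw [Fintype.sum_prod_type]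
      have hx : ∀ x : X, (∑ y, if y ∈ Bη then π x * η y else 0)
          = π x * ∑ y, (if y ∈ Bη then η y else 0) := by
        intro x
        rw [Finset.mul_sum]
        exact Finset.sum_congr rfl fun y _ => by
          split <;> simp
      simp_rw [hx]
      rw [← Finset.sum_mul, hπ1, one_mul, Finset.sum_ite_mem, Finset.univ_inter, hηBdef]
    calc ∑ z ∈ Fc', π z.1 * η z.2
        ≤ ∑ z : X × X, ((if z.1 ∈ B then π z.1 * η z.2 else 0)
            + (if z.2 ∈ Bη then π z.1 * η z.2 else 0)) := step1'
      _ = πB + ηB := by rw [Finset.sum_add_distrib, eq1, eq2]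
  set PB : X × X → Prop := fun e =>
    ∃ x y : X, x ≠ y ∧ e ∈ pathEdges (γ x y) ∧ (x ∈ B ∨ y ∈ Bη) with hPBdef
  set BF := Finset.univ.filter PB with hBFdef
  have hSBeq : SB = ∑ e ∈ BF, 1 / Qw π k e := by
    rw [hSBdef, hBFdef, Finset.sum_filter]
  have hQposBF : ∀ e ∈ BF, 0 < Qw π k e := by
    intro e he
    obtain ⟨x, y, hxy, hmem, -⟩ := (Finset.mem_filter.1 he).2
    exact hQpos e ((hγ x y hxy).2.2 e hmem)
  have hBFsum : (∑ e ∈ BF, |g e.2 - g e.1|) ^ 2 ≤ SB * (2 * E) := by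
    have hcs := Finset.sum_mul_sq_le_sq_mul_sq BF
      (fun e => Real.sqrt (1 / Qw π k e))
      (fun e => Real.sqrt (Qw π k e) * |g e.2 - g e.1|)
    have e1 : ∑ e ∈ BF, Real.sqrt (1 / Qw π k e) *
        (Real.sqrt (Qw π k e) * |g e.2 - g e.1|) = ∑ e ∈ BF, |g e.2 - g e.1| :=
      Finset.sum_congr rfl fun e he => by
        have hQ := hQposBF e he
        rw [← mul_assoc, ← Real.sqrt_mul (one_div_nonneg.2 hQ.le),
          one_div_mul_cancel hQ.ne', Real.sqrt_one, one_mul]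
    have e2 : ∑ e ∈ BF, (Real.sqrt (1 / Qw π k e)) ^ 2 = ∑ e ∈ BF, 1 / Qw π k e :=
      Finset.sum_congr rfl fun e _ => Real.sq_sqrt (one_div_nonneg.2 (hQnn e))
    have e3 : ∑ e ∈ BF, (Real.sqrt (Qw π k e) * |g e.2 - g e.1|) ^ 2
        = ∑ e ∈ BF, (g e.2 - g e.1) ^ 2 * Qw π k e :=
      Finset.sum_congr rfl fun e _ => by
        rw [mul_pow, Real.sq_sqrt (hQnn e), sq_abs]; ring
    rw [e1, e2, e3] at hcs
    calc (∑ e ∈ BF, |g e.2 - g e.1|) ^ 2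
        ≤ (∑ e ∈ BF, 1 / Qw π k e) * ∑ e ∈ BF, (g e.2 - g e.1) ^ 2 * Qw π k e := hcs
      _ ≤ SB * (2 * E) := by
          rw [← hSBeq]
          exact mul_le_mul_of_nonneg_left (h2E BF) hSB0
  set s0 := Real.sqrt (SB * (2 * E)) with hs0def
  have hs00 : 0 ≤ s0 := Real.sqrt_nonneg _
  have hdle : ∀ z ∈ Fc', |g z.2 - g z.1| ≤ s0 := by
    intro z hz
    obtain ⟨hnp, hne⟩ := (Finset.mem_filter.1 hz).2
    obtain ⟨s, hs1, -, hs3⟩ := hpathsum z.1 z.2 hne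
    have hsubBF : s ⊆ BF := fun e he =>
      Finset.mem_filter.2 ⟨Finset.mem_univ e, ⟨z.1, z.2, hne, hs1 e he, hBorB z hz⟩⟩
    calc |g z.2 - g z.1| ≤ ∑ e ∈ s, |g e.2 - g e.1| := hs3
      _ ≤ ∑ e ∈ BF, |g e.2 - g e.1| :=
          Finset.sum_le_sum_of_subset_of_nonneg hsubBF (fun _ _ _ => abs_nonneg _)
      _ ≤ s0 := by
          rw [hs0def, ← Real.sqrt_sq (Finset.sum_nonneg fun e _ => abs_nonneg _)]
          exact Real.sqrt_le_sqrt hBFsum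
  have hRs : R ≤ s0 * (πB + ηB) := by
    rw [hRsplit]
    calc ∑ z ∈ Fc', π z.1 * η z.2 * |g z.2 - g z.1|
        ≤ ∑ z ∈ Fc', π z.1 * η z.2 * s0 :=
          Finset.sum_le_sum fun z hz => mul_le_mul_of_nonneg_left (hdle z hz) (hπηnn z)
      _ = (∑ z ∈ Fc', π z.1 * η z.2) * s0 := by rw [← Finset.sum_mul]
      _ ≤ (πB + ηB) * s0 := mul_le_mul_of_nonneg_right hWbound hs00
      _ = s0 * (πB + ηB) := mul_comm _ _
  have hR2 : R ≤ 2 * (πB + ηB) := by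
    rw [hRsplit]
    calc ∑ z ∈ Fc', π z.1 * η z.2 * |g z.2 - g z.1|
        ≤ ∑ z ∈ Fc', π z.1 * η z.2 * 2 :=
          Finset.sum_le_sum fun z _ => mul_le_mul_of_nonneg_left (habs2 z) (hπηnn z)
      _ = (∑ z ∈ Fc', π z.1 * η z.2) * 2 := by rw [← Finset.sum_mul]
      _ ≤ (πB + ηB) * 2 := mul_le_mul_of_nonneg_right hWbound (by norm_num)
      _ = 2 * (πB + ηB) := mul_comm _ _
  -- final assembly with real powers
  have hq2' : (0:ℝ) ≤ q - 2 := by linarith only [hq2]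
  have hγAE0 : 0 ≤ γs * (A * (2 * E)) := le_trans (sq_nonneg T) hT2E
  have heqAE : γs * (A * (2 * E)) = 2 * (γs * A * E) := by ring
  have hγAE0' : 0 ≤ γs * A * E := by linarith only [hγAE0, heqAE]
  have hTq : T ^ q ≤ 2 ^ (q - 1) * (γs * A * E) := by
    rcases eq_or_lt_of_le hT0 with h | h
    · rw [← h, Real.zero_rpow hq0.ne']
      exact mul_nonneg (Real.rpow_nonneg (by norm_num) _) hγAE0'
    · have h1 : T ^ q = T ^ (2:ℝ) * T ^ (q - 2) := by
        rw [← Real.rpow_add h]; norm_num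
      have h2 : T ^ (2:ℝ) = T ^ 2 := Real.rpow_two T
      have h3 : T ^ (q - 2) ≤ 2 ^ (q - 2) := Real.rpow_le_rpow hT0 hT2' hq2'
      have h4 : T ^ 2 ≤ 2 * (γs * A * E) := by linarith only [hT2E, heqAE]
      calc T ^ q = T ^ 2 * T ^ (q - 2) := by rw [h1, h2]
        _ ≤ (2 * (γs * A * E)) * 2 ^ (q - 2) :=
            mul_le_mul h4 h3 (Real.rpow_nonneg hT0 _) (by linarith only [hγAE0'])
        _ = 2 ^ (q - 1) * (γs * A * E) := by
            rw [show (q - 1 : ℝ) = 1 + (q - 2) by ring, Real.rpow_add (by norm_num),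
              Real.rpow_one]
            ring
  have hSES0 : 0 ≤ SB * E * (πB ^ q + ηB ^ q) :=
    mul_nonneg (mul_nonneg hSB0 hE0)
      (add_nonneg (Real.rpow_nonneg hπB0 _) (Real.rpow_nonneg hηB0 _))
  have hW0 : 0 ≤ πB + ηB := add_nonneg hπB0 hηB0
  have hRq : R ^ q ≤ 2 ^ (2 * q - 2) * (SB * E * (πB ^ q + ηB ^ q)) := by
    rcases eq_or_lt_of_le hR0 with h | h
    · rw [← h, Real.zero_rpow hq0.ne']
      exact mul_nonneg (Real.rpow_nonneg (by norm_num) _) hSES0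
    · have hW0' : 0 < πB + ηB := by
        by_contra hc
        push_neg at hc
        have : R ≤ 0 := le_trans hR2 (by linarith only [hc])
        linarith only [this, h]
      have h1 : R ^ q = R ^ 2 * R ^ (q - 2) := by
        rw [← Real.rpow_two, ← Real.rpow_add h]; norm_num
      have h2 : R ^ 2 ≤ (s0 * (πB + ηB)) ^ 2 := pow_le_pow_left₀ hR0 hRs 2
      have h3 : R ^ (q - 2) ≤ (2 * (πB + ηB)) ^ (q - 2) :=
        Real.rpow_le_rpow hR0 hR2 hq2'
      have h4 : (s0 * (πB + ηB)) ^ 2 = SB * (2 * E) * (πB + ηB) ^ 2 := by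
        rw [mul_pow, hs0def, Real.sq_sqrt (mul_nonneg hSB0 (by linarith only [hE0]))]
      have h5 : ((2:ℝ) * (πB + ηB)) ^ (q - 2) = 2 ^ (q - 2) * (πB + ηB) ^ (q - 2) :=
        Real.mul_rpow (by norm_num) hW0
      have h6 : ((πB + ηB) : ℝ) ^ 2 * (πB + ηB) ^ (q - 2) = (πB + ηB) ^ q := by
        rw [← Real.rpow_two, ← Real.rpow_add hW0']; norm_num
      have h7 : ((πB + ηB) : ℝ) ^ q ≤ 2 ^ (q - 1) * (πB ^ q + ηB ^ q) :=
        pm_ineq hq1 hπB0 hηB0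
      have h8 : (0:ℝ) ≤ SB * (2 * E) * 2 ^ (q - 2) :=
        mul_nonneg (mul_nonneg hSB0 (by linarith only [hE0])) (Real.rpow_nonneg (by norm_num) _)
      calc R ^ q = R ^ 2 * R ^ (q - 2) := h1
        _ ≤ (s0 * (πB + ηB)) ^ 2 * (2 * (πB + ηB)) ^ (q - 2) :=
            mul_le_mul h2 h3 (Real.rpow_nonneg hR0 _) (sq_nonneg _)
        _ = SB * (2 * E) * 2 ^ (q - 2) * ((πB + ηB) ^ 2 * (πB + ηB) ^ (q - 2)) := by
            rw [h4, h5]; ring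
        _ = SB * (2 * E) * 2 ^ (q - 2) * (πB + ηB) ^ q := by rw [h6]
        _ ≤ SB * (2 * E) * 2 ^ (q - 2) * (2 ^ (q - 1) * (πB ^ q + ηB ^ q)) :=
            mul_le_mul_of_nonneg_left h7 h8
        _ = 2 ^ (q - 2) * 2 ^ (q - 1) * 2 * (SB * E * (πB ^ q + ηB ^ q)) := by ring
        _ = 2 ^ (2 * q - 2) * (SB * E * (πB ^ q + ηB ^ q)) := by
            rw [← Real.rpow_add (by norm_num : (0:ℝ) < 2),
              show ((2:ℝ) ^ (q - 2 + (q - 1)) * 2 : ℝ)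
                = 2 ^ (q - 2 + (q - 1)) * 2 ^ (1:ℝ) by rw [Real.rpow_one],
              ← Real.rpow_add (by norm_num : (0:ℝ) < 2),
              show (q - 2 + (q - 1) + 1 : ℝ) = 2 * q - 2 by ring]
  have hL0 : 0 ≤ ∑ x, η x * |g x| :=
    Finset.sum_nonneg fun x _ => mul_nonneg (hηnn x) (abs_nonneg _)
  have hfinal1 : (∑ x, η x * |g x|) ^ q ≤ (T + R) ^ q :=
    Real.rpow_le_rpow hL0 step1 hq0.le
  have hfinal2 : (T + R) ^ q ≤ 2 ^ (q - 1) * (T ^ q + R ^ q) := pm_ineq hq1 hT0 hR0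
  calc (∑ x, η x * |g x|) ^ q ≤ 2 ^ (q - 1) * (T ^ q + R ^ q) :=
        le_trans hfinal1 hfinal2
    _ ≤ 2 ^ (q - 1) * (2 ^ (q - 1) * (γs * A * E)
          + 2 ^ (2 * q - 2) * (SB * E * (πB ^ q + ηB ^ q))) :=
        mul_le_mul_of_nonneg_left (add_le_add hTq hRq)
          (Real.rpow_nonneg (by norm_num) _)
    _ = 2 ^ (2 * q - 2) * (γs * A * E)
          + 2 ^ (3 * q - 3) * (SB * E * (πB ^ q + ηB ^ q)) := by
        have h9 : (2:ℝ) ^ (q - 1) * (2 ^ (q - 1) * (γs * A * E))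
            = 2 ^ (2 * q - 2) * (γs * A * E) := by
          rw [← mul_assoc, ← Real.rpow_add (by norm_num : (0:ℝ) < 2),
            show (q - 1 + (q - 1) : ℝ) = 2 * q - 2 by ring]
        have h10 : (2:ℝ) ^ (q - 1) * (2 ^ (2 * q - 2) * (SB * E * (πB ^ q + ηB ^ q)))
            = 2 ^ (3 * q - 3) * (SB * E * (πB ^ q + ηB ^ q)) := by
          rw [← mul_assoc, ← Real.rpow_add (by norm_num : (0:ℝ) < 2),
            show (q - 1 + (2 * q - 2) : ℝ) = 3 * q - 3 by ring]
        rw [mul_add, h9, h10]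
    _ ≤ 2 ^ (3 * q - 3) * (γs * A * E)
          + 2 ^ (3 * q - 2) * (SB * E * (πB ^ q + ηB ^ q)) := by
        refine add_le_add ?_ ?_
        · exact mul_le_mul_of_nonneg_right
            ((Real.rpow_le_rpow_left_iff one_lt_two).2 (by linarith only [hq1])) hγAE0'
        · exact mul_le_mul_of_nonneg_right
            ((Real.rpow_le_rpow_left_iff one_lt_two).2 (by linarith only [])) hSES0
    _ = 2 ^ (6 / p - 3) * (γs * A + 2 * SB * (πB ^ q + ηB ^ q)) * E := by
        rw [show (6 / p - 3 : ℝ) = 3 * q - 3 by rw [hqdef]; ring,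
          show (3 * q - 2 : ℝ) = 3 * q - 3 + 1 by ring,
          Real.rpow_add (by norm_num : (0:ℝ) < 2), Real.rpow_one]
        ring


set_option maxHeartbeats 1000000 in
theorem statement7 {X : Type} [Fintype X] [DecidableEq X] [Nonempty X]
    (π : X → ℝ) (hπpos : ∀ x, 0 < π x) (hπ1 : ∑ x, π x = 1)
    (k : X → X → ℝ) (hknn : ∀ x y, 0 ≤ k x y) (hksymm : ∀ x y, k x y = k y x)
    (hconn : (SimpleGraph.fromRel fun x y => k x y ≠ 0).Connected)
    -- a choice of a path `γ x y` from `x` to `y` for each pair of distinct points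
    (γ : X → X → List X)
    (hγ : ∀ x y, x ≠ y → (γ x y).head? = some x ∧ (γ x y).getLast? = some y ∧
      ∀ e ∈ pathEdges (γ x y), k e.1 e.2 ≠ 0)
    (p : ℝ) (hp : p ∈ Set.Ioc (0 : ℝ) 1)
    -- two partitions of the state space
    (B G : Finset X) (hBG : Disjoint B G) (hcover : B ∪ G = Finset.univ)
    (Bη Gη : Finset X) (hBGη : Disjoint Bη Gη) (hcoverη : Bη ∪ Gη = Finset.univ)
    (η : X → ℝ) (hηnn : ∀ x, 0 ≤ η x) (hη1 : ∑ x, η x = 1) :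
    1 / genPoincare π k η p ≤
      (2 : ℝ) ^ (6 / p - 3) *
        ((sSup { r : ℝ | ∃ x y : X, x ≠ y ∧ r = ((γ x y).length - 1 : ℕ) }) *
          (sSup { r : ℝ | ∃ e : X × X, Qw π k e ≠ 0 ∧
            r = (1 / Qw π k e) *
              ∑ x, ∑ y, if x ∈ G ∧ y ∈ Gη ∧ x ≠ y ∧ e ∈ pathEdges (γ x y) then
                π x * η y else 0 }) +
        2 * (∑ e : X × X,
              if ∃ x y : X, x ≠ y ∧ e ∈ pathEdges (γ x y) ∧ (x ∈ B ∨ y ∈ Bη) then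
                1 / Qw π k e else 0) *
          ((∑ x ∈ B, π x) ^ (2 / p) + (∑ x ∈ Bη, η x) ^ (2 / p))) := by
  obtain ⟨hp0, hp1⟩ := hp
  set C := (2 : ℝ) ^ (6 / p - 3) *
        ((sSup { r : ℝ | ∃ x y : X, x ≠ y ∧ r = ((γ x y).length - 1 : ℕ) }) *
          (sSup { r : ℝ | ∃ e : X × X, Qw π k e ≠ 0 ∧
            r = (1 / Qw π k e) *
              ∑ x, ∑ y, if x ∈ G ∧ y ∈ Gη ∧ x ≠ y ∧ e ∈ pathEdges (γ x y) then
                π x * η y else 0 }) +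
        2 * (∑ e : X × X,
              if ∃ x y : X, x ≠ y ∧ e ∈ pathEdges (γ x y) ∧ (x ∈ B ∨ y ∈ Bη) then
                1 / Qw π k e else 0) *
          ((∑ x ∈ B, π x) ^ (2 / p) + (∑ x ∈ Bη, η x) ^ (2 / p))) with hCdef
  -- nonnegativity of the right-hand side
  have hQnn : ∀ e : X × X, 0 ≤ Qw π k e := fun e => by
    have h1 := hknn e.1 e.2
    have h2 := (hπpos e.1).le
    have h3 := (hπpos e.2).le
    unfold Qw; positivity
  have hπηnn : ∀ z : X × X, 0 ≤ π z.1 * η z.2 :=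
    fun z => mul_nonneg (hπpos z.1).le (hηnn z.2)
  have hγs0 : 0 ≤ sSup { r : ℝ | ∃ x y : X, x ≠ y ∧ r = ((γ x y).length - 1 : ℕ) } :=
    Real.sSup_nonneg (by rintro r ⟨x, y, -, rfl⟩; positivity)
  have hA0 : 0 ≤ sSup { r : ℝ | ∃ e : X × X, Qw π k e ≠ 0 ∧
      r = (1 / Qw π k e) *
        ∑ x, ∑ y, if x ∈ G ∧ y ∈ Gη ∧ x ≠ y ∧ e ∈ pathEdges (γ x y) then
          π x * η y else 0 } := Real.sSup_nonneg (by
    rintro r ⟨e, -, rfl⟩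
    refine mul_nonneg (one_div_nonneg.2 (hQnn e)) ?_
    refine Finset.sum_nonneg fun x _ => Finset.sum_nonneg fun y _ => ?_
    split
    · exact hπηnn (x, y)
    · exact le_rfl)
  have hSB0 : (0:ℝ) ≤ ∑ e : X × X,
      if ∃ x y : X, x ≠ y ∧ e ∈ pathEdges (γ x y) ∧ (x ∈ B ∨ y ∈ Bη) then
        1 / Qw π k e else 0 := Finset.sum_nonneg fun e _ => by
    split
    · exact one_div_nonneg.2 (hQnn e)
    · exact le_rfl
  have hπB0 : (0:ℝ) ≤ ∑ x ∈ B, π x := Finset.sum_nonneg fun x _ => (hπpos x).le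
  have hηB0 : (0:ℝ) ≤ ∑ x ∈ Bη, η x := Finset.sum_nonneg fun x _ => hηnn x
  have hC0 : 0 ≤ C := by
    rw [hCdef]
    refine mul_nonneg (Real.rpow_nonneg (by norm_num) _) ?_
    refine add_nonneg (mul_nonneg hγs0 hA0) ?_
    refine mul_nonneg (mul_nonneg (by norm_num) hSB0) ?_
    exact add_nonneg (Real.rpow_nonneg hπB0 _) (Real.rpow_nonneg hηB0 _)
  set S := { r : ℝ | ∃ f : X → ℝ, f ≠ 0 ∧ (∑ x, π x * f x) = 0 ∧
      (∑ x, η x * |f x|) ≠ 0 ∧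
      r = dirichletForm π k f f * supNorm f ^ ((2 - 2 * p) / p) /
        (∑ x, η x * |f x|) ^ (2 / p) } with hSdef
  have hgen : genPoincare π k η p = sInf S := rfl
  rcases Set.eq_empty_or_nonempty S with hS | hS
  · rw [hgen, hS, Real.sInf_empty, div_zero]
    exact hC0
  · have hmain : ∀ r ∈ S, 1 / C ≤ r ∧ 0 < C := by
      rintro r ⟨f, hf0, hπf, hηf, rfl⟩
      set N := supNorm f with hNdef
      have hbdd : BddAbove (Set.range fun x => |f x|) :=
        Set.Finite.bddAbove (Set.finite_range _)
      have hNle : ∀ x, |f x| ≤ N := fun x => le_ciSup hbdd x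
      have hNpos : 0 < N := by
        obtain ⟨x, hx⟩ : ∃ x, f x ≠ 0 := by
          by_contra hc; push_neg at hc; exact hf0 (funext hc)
        exact lt_of_lt_of_le (abs_pos.2 hx) (hNle x)
      have hg0 : (∑ x, π x * (f x / N)) = 0 := by
        have h1 : (∑ x, π x * (f x / N)) = (∑ x, π x * f x) / N := by
          rw [Finset.sum_div]
          exact Finset.sum_congr rfl fun x _ => (mul_div_assoc _ _ _).symm
        rw [h1, hπf, zero_div]
      have hgb : ∀ x, |f x / N| ≤ 1 := fun x => by
        rw [abs_div, abs_of_pos hNpos]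
        exact (div_le_one hNpos).2 (hNle x)
      have hmi := main_ineq π hπpos hπ1 k hknn γ hγ p ⟨hp0, hp1⟩ B G hcover
        Bη Gη hcoverη η hηnn hη1 (fun x => f x / N) hg0 hgb
      rw [← hCdef] at hmi
      set D := ∑ x, η x * |f x| with hDdef
      have hDpos : 0 < D := lt_of_le_of_ne
        (Finset.sum_nonneg fun x _ => mul_nonneg (hηnn x) (abs_nonneg _)) (Ne.symm hηf)
      have hD : (∑ x, η x * |f x / N|) = D / N := by
        rw [hDdef, Finset.sum_div]
        exact Finset.sum_congr rfl fun x _ => by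
          rw [abs_div, abs_of_pos hNpos, mul_div_assoc]
      set EF := dirichletForm π k f f with hEFdef
      have hEF0 : 0 ≤ EF := dirichlet_nonneg π k hknn (fun x => (hπpos x).le) f
      have hEg : dirichletForm π k (fun x => f x / N) (fun x => f x / N)
          = EF / N ^ 2 := by
        rw [hEFdef]
        unfold dirichletForm
        have hterm : ∀ x y : X, (f x / N - f y / N) * (f x / N - f y / N)
            * k x y * π x * π y
            = ((f x - f y) * (f x - f y) * k x y * π x * π y) / N ^ 2 := by
          intro x y
          ring
        simp_rw [hterm, ← Finset.sum_div]
        ring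
      rw [hD, hEg] at hmi
      have hNq : 0 < N ^ (2 / p) := Real.rpow_pos_of_pos hNpos _
      have hdiv : (D / N) ^ (2 / p) = D ^ (2 / p) / N ^ (2 / p) :=
        Real.div_rpow hDpos.le hNpos.le _
      rw [hdiv, div_le_iff₀ hNq] at hmi
      -- hmi : D ^ (2/p) ≤ C * (EF / N^2) * N^(2/p)
      have hNexp : N ^ (2 / p) / N ^ 2 = N ^ ((2 - 2 * p) / p) := by
        rw [show (N ^ 2 : ℝ) = N ^ (2:ℝ) from (Real.rpow_two N).symm,
          ← Real.rpow_sub hNpos,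
          show (2 / p - 2 : ℝ) = (2 - 2 * p) / p from by field_simp]
      have hre : C * (EF / N ^ 2) * N ^ (2 / p)
          = C * (EF * N ^ ((2 - 2 * p) / p)) := by
        rw [← hNexp]; ring
      rw [hre] at hmi
      set Xv := EF * N ^ ((2 - 2 * p) / p) with hXvdef
      have hXv0 : 0 ≤ Xv :=
        mul_nonneg hEF0 (Real.rpow_nonneg hNpos.le _)
      have hDq : 0 < D ^ (2 / p) := Real.rpow_pos_of_pos hDpos _
      have hCpos : 0 < C := by
        rcases lt_or_ge 0 C with h | h
        · exact h
        · exfalso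
          have : C * Xv ≤ 0 := mul_nonpos_iff.2 (Or.inr ⟨h, hXv0⟩)
          linarith only [this, hDq, hmi]
      constructor
      · rw [div_le_div_iff₀ hCpos hDq, one_mul]
        exact hmi.trans_eq (mul_comm C Xv)
      · exact hCpos
    obtain ⟨r₀, hr₀⟩ := hS
    have hCpos : 0 < C := (hmain r₀ hr₀).2
    have hInf : 1 / C ≤ sInf S := le_csInf ⟨r₀, hr₀⟩ fun r hr => (hmain r hr).1
    have hLpos : 0 < sInf S := lt_of_lt_of_le (one_div_pos.2 hCpos) hInf
    rw [hgen]
    have h2 := one_div_le_one_div_of_le (one_div_pos.2 hCpos) hInf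
    rwa [one_div_one_div] at h2

end
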